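/- arXiv:1610.02071 — 3 statements merged into one kernel-verified Lean document; each statement's English description precedes it below -/
import Mathlib

section
/- With the notation above, if lim_n (1/n) log E[e^{n⟨x*,X_n⟩}] = G(x*) and lim_n (1/n) log E[e^{n⟨x*,X_n⟩ + nφ_m(Y_n)}] = G(x*) + J(φ_m), where J(φ_m) = sup_{z∈Y}(φ_m(z) − I_Y(z)) ≥ φ_m(y) − I_Y(y) = −I_Y(y) for a point y with φ(y) = 1, then limsup_n (1/n) log P̃(Y_n ∈ Δ₂ᶜ) ≤ −m + I_Y(y). In particular this bound tends to −∞ as m → ∞. -/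
open MeasureTheory Real Filter

/-- If `(1/n) log E[e^{n⟨x*,X_n⟩}] → G(x*)` and
`(1/n) log E[e^{n⟨x*,X_n⟩+nφ_m(Y_n)}] → G(x*) + J(φ_m)` with
`J(φ_m) = sup_z (φ_m(z) − I_Y(z)) ≥ −I_Y(y)` (where `φ(y) = 1`), then
`limsup (1/n) log P̃(Y_n ∈ Δ₂ᶜ) ≤ −m + I_Y(y)`. -/
theorem stmt7 {Ω : Type*} [MeasurableSpace Ω] (P : Measure Ω) [IsProbabilityMeasure P]
    {X : Type*} [AddCommGroup X] [Module ℝ X] [TopologicalSpace X]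
    [IsTopologicalAddGroup X] [ContinuousSMul ℝ X]
    {Y : Type*} [TopologicalSpace Y] [MeasurableSpace Y] [BorelSpace Y]
    (Xn : ℕ → Ω → X) (Yn : ℕ → Ω → Y) (hYn : ∀ n, Measurable (Yn n))
    (xs : X →L[ℝ] ℝ) (hXn : ∀ n, Measurable fun ω => xs (Xn n ω))
    (C : ℝ) (hbd : ∀ n ω, |xs (Xn n ω)| ≤ C)
    (φ : Y → ℝ) (hφcont : Continuous φ) (hφ01 : ∀ z, φ z ∈ Set.Icc (0 : ℝ) 1)
    (y : Y) (hφy : φ y = 1)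
    (Δ₂ : Set Y) (hΔ₂ : MeasurableSet Δ₂) (hφ0 : ∀ z ∉ Δ₂, φ z = 0)
    (m : ℝ) (hm : 0 < m)
    (φm : Y → ℝ) (hφm : ∀ z, φm z = m * (φ z - 1))
    (IY : Y → EReal) (hIY0 : ∀ z, 0 ≤ IY z) (hIYy : IY y ≠ ⊤)
    (Gx Jm : ℝ)
    (hJm : (Jm : EReal) = ⨆ z : Y, ((φm z : EReal) - IY z))
    (ℓn : ℕ → ℝ)
    (hℓn : ∀ n, ℓn n = (1 / (n : ℝ)) * Real.log (∫ ω, Real.exp (n * xs (Xn n ω)) ∂P))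
    (hℓlim : Tendsto ℓn atTop (nhds Gx))
    (Ln : ℕ → ℝ)
    (hLn : ∀ n, Ln n = (1 / (n : ℝ)) *
      Real.log (∫ ω, Real.exp (n * xs (Xn n ω) + n * φm (Yn n ω)) ∂P))
    (hLlim : Tendsto Ln atTop (nhds (Gx + Jm)))
    (Ptilde : ℕ → Measure Ω)
    (hPtilde : ∀ n, Ptilde n = P.withDensity
      (fun ω => ENNReal.ofReal (Real.exp (n * xs (Xn n ω) + n * φm (Yn n ω) - n * Ln n)))) :
    Filter.limsup
        (fun n : ℕ => ((1 / (n : ℝ) : ℝ) : EReal) * ENNReal.log ((Ptilde n) {ω | Yn n ω ∈ Δ₂ᶜ}))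
        atTop
      ≤ ((-m + (IY y).toReal : ℝ) : EReal) := by
  -- basic facts about IY y
  have hIYbot : IY y ≠ ⊥ := ne_bot_of_le_ne_bot (by simp) (hIY0 y)
  have hIYcoe : ((IY y).toReal : EReal) = IY y := EReal.coe_toReal hIYy hIYbot
  -- Jm ≥ -(IY y).toReal
  have hJge : -(IY y).toReal ≤ Jm := by
    have h1 : ((φm y : ℝ) : EReal) - IY y ≤ (Jm : EReal) := by
      rw [hJm]; exact le_iSup (fun z => ((φm z : ℝ) : EReal) - IY z) y
    have hφmy : φm y = 0 := by rw [hφm, hφy]; ring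
    rw [hφmy] at h1
    have : (-(IY y).toReal : ℝ) ≤ (Jm : EReal) := by
      rw [EReal.coe_neg, hIYcoe]
      calc ((-(IY y) : EReal)) = 0 - IY y := by rw [zero_sub]
        _ ≤ (Jm : EReal) := by exact_mod_cast h1
    exact_mod_cast this
  -- pointwise key bound
  have key : ∀ n : ℕ, 1 ≤ n →
      ((1 / (n : ℝ) : ℝ) : EReal) * ENNReal.log ((Ptilde n) {ω | Yn n ω ∈ Δ₂ᶜ})
        ≤ ((ℓn n - m - Ln n : ℝ) : EReal) := by
    intro n hn
    have hn0 : (n : ℝ) ≠ 0 := by positivity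
    have hnpos : (0 : ℝ) < n := by exact_mod_cast hn
    -- measurability
    set A : Set Ω := {ω | Yn n ω ∈ Δ₂ᶜ} with hA
    have hAm : MeasurableSet A := (hYn n) hΔ₂.compl
    have hφmYm : Measurable fun ω => φm (Yn n ω) := by
      have : (fun ω => φm (Yn n ω)) = fun ω => m * (φ (Yn n ω) - 1) := by
        funext ω; rw [hφm]
      rw [this]
      exact (measurable_const.mul ((hφcont.measurable.comp (hYn n)).sub measurable_const))
    have hexpm : Measurable fun ω => Real.exp ((n : ℝ) * xs (Xn n ω)) :=
      (measurable_const.mul (hXn n)).exp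
    -- integrability of exp(n xs)
    have hint : Integrable (fun ω => Real.exp ((n : ℝ) * xs (Xn n ω))) P := by
      refine Integrable.mono' (integrable_const (Real.exp ((n : ℝ) * C)))
        hexpm.aestronglyMeasurable (Filter.Eventually.of_forall fun ω => ?_)
      rw [Real.norm_eq_abs, abs_of_pos (Real.exp_pos _)]
      exact Real.exp_le_exp.2 (mul_le_mul_of_nonneg_left
        ((abs_le.1 (hbd n ω)).2) (by positivity))
    have hIpos : 0 < ∫ ω, Real.exp ((n : ℝ) * xs (Xn n ω)) ∂P := integral_exp_pos hint
    -- integral equals exp(n ℓn n)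
    have hIeq : ∫ ω, Real.exp ((n : ℝ) * xs (Xn n ω)) ∂P = Real.exp ((n : ℝ) * ℓn n) := by
      have : (n : ℝ) * ℓn n = Real.log (∫ ω, Real.exp ((n : ℝ) * xs (Xn n ω)) ∂P) := by
        rw [hℓn]; field_simp
      rw [this, Real.exp_log hIpos]
    -- compute Ptilde n A
    have hmeas : Measurable fun ω =>
        ENNReal.ofReal (Real.exp ((n : ℝ) * xs (Xn n ω) + (n : ℝ) * φm (Yn n ω)
          - (n : ℝ) * Ln n)) := by
      exact (((measurable_const.mul (hXn n)).add
        (measurable_const.mul hφmYm)).sub measurable_const).exp.ennreal_ofReal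
    have happ : (Ptilde n) A = ∫⁻ ω in A, ENNReal.ofReal
        (Real.exp ((n : ℝ) * xs (Xn n ω) + (n : ℝ) * φm (Yn n ω) - (n : ℝ) * Ln n)) ∂P := by
      rw [hPtilde n, withDensity_apply _ hAm]
    -- on A, the integrand simplifies
    have hcongr : ∫⁻ ω in A, ENNReal.ofReal
        (Real.exp ((n : ℝ) * xs (Xn n ω) + (n : ℝ) * φm (Yn n ω) - (n : ℝ) * Ln n)) ∂P
        = ∫⁻ ω in A, ENNReal.ofReal (Real.exp (-(n : ℝ) * m - (n : ℝ) * Ln n))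
            * ENNReal.ofReal (Real.exp ((n : ℝ) * xs (Xn n ω))) ∂P := by
      refine setLIntegral_congr_fun hAm (fun ω hω => ?_)
      have hφ0' : φ (Yn n ω) = 0 := hφ0 _ hω
      have hφm' : φm (Yn n ω) = -m := by rw [hφm, hφ0']; ring
      rw [hφm', ← ENNReal.ofReal_mul (Real.exp_pos _).le, ← Real.exp_add]
      ring_nf
    -- bound the measure
    have hbound : (Ptilde n) A ≤
        ENNReal.ofReal (Real.exp ((n : ℝ) * (ℓn n - m - Ln n))) := by
      rw [happ, hcongr]
      rw [lintegral_const_mul _ hexpm.ennreal_ofReal]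
      calc ENNReal.ofReal (Real.exp (-(n : ℝ) * m - (n : ℝ) * Ln n)) *
            ∫⁻ ω in A, ENNReal.ofReal (Real.exp ((n : ℝ) * xs (Xn n ω))) ∂P
          ≤ ENNReal.ofReal (Real.exp (-(n : ℝ) * m - (n : ℝ) * Ln n)) *
            ∫⁻ ω, ENNReal.ofReal (Real.exp ((n : ℝ) * xs (Xn n ω))) ∂P := by
            exact mul_le_mul_right (setLIntegral_le_lintegral _ _) _
        _ = ENNReal.ofReal (Real.exp (-(n : ℝ) * m - (n : ℝ) * Ln n)) *
            ENNReal.ofReal (∫ ω, Real.exp ((n : ℝ) * xs (Xn n ω)) ∂P) := by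
            rw [← ofReal_integral_eq_lintegral_ofReal hint
              (Filter.Eventually.of_forall fun ω => (Real.exp_pos _).le)]
        _ = ENNReal.ofReal (Real.exp ((n : ℝ) * (ℓn n - m - Ln n))) := by
            rw [hIeq, ← ENNReal.ofReal_mul (Real.exp_pos _).le, ← Real.exp_add]
            congr 1
            ring
    -- take logs
    have hlog : ENNReal.log ((Ptilde n) A) ≤ (((n : ℝ) * (ℓn n - m - Ln n) : ℝ) : EReal) := by
      calc ENNReal.log ((Ptilde n) A)
          ≤ ENNReal.log (ENNReal.ofReal (Real.exp ((n : ℝ) * (ℓn n - m - Ln n)))) :=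
            ENNReal.log_monotone hbound
        _ = (((n : ℝ) * (ℓn n - m - Ln n) : ℝ) : EReal) := by
            rw [ENNReal.log_ofReal_of_pos (Real.exp_pos _), Real.log_exp]
    have hmul := mul_le_mul_of_nonneg_left hlog
      (by exact_mod_cast (by positivity : (0:ℝ) ≤ 1 / (n:ℝ)) :
        (0 : EReal) ≤ ((1 / (n : ℝ) : ℝ) : EReal))
    calc ((1 / (n : ℝ) : ℝ) : EReal) * ENNReal.log ((Ptilde n) A)
        ≤ ((1 / (n : ℝ) : ℝ) : EReal) * (((n : ℝ) * (ℓn n - m - Ln n) : ℝ) : EReal) := hmul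
      _ = ((ℓn n - m - Ln n : ℝ) : EReal) := by
          rw [← EReal.coe_mul]
          congr 1
          field_simp
  -- convergence of the bound
  have hg : Tendsto (fun n => ((ℓn n - m - Ln n : ℝ) : EReal)) atTop
      (nhds ((-m - Jm : ℝ) : EReal)) := by
    rw [EReal.tendsto_coe]
    have : Tendsto (fun n => ℓn n - m - Ln n) atTop (nhds (Gx - m - (Gx + Jm))) :=
      (hℓlim.sub tendsto_const_nhds).sub hLlim
    convert this using 2
    ring
  have hlimsup : Filter.limsup (fun n => ((ℓn n - m - Ln n : ℝ) : EReal)) atTop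
      = ((-m - Jm : ℝ) : EReal) := hg.limsup_eq
  calc Filter.limsup
        (fun n : ℕ => ((1 / (n : ℝ) : ℝ) : EReal) * ENNReal.log ((Ptilde n) {ω | Yn n ω ∈ Δ₂ᶜ}))
        atTop
      ≤ Filter.limsup (fun n => ((ℓn n - m - Ln n : ℝ) : EReal)) atTop := by
        refine limsup_le_limsup (Filter.eventually_atTop.2 ⟨1, key⟩)
    _ = ((-m - Jm : ℝ) : EReal) := hlimsup
    _ ≤ ((-m + (IY y).toReal : ℝ) : EReal) := by
        apply EReal.coe_le_coe_iff.2
        linarith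
end

section
/- Let μ_V be a probability measure on [α⁻,α⁺] and let μ be a measure on [α⁻,α⁺] with dμ = h dμ_V where h is continuous and strictly positive. Set f = 1 − h^{−1}, which is continuous with sup f < 1. Then for any finite measure ν ≠ μ on [α⁻,α⁺] absolutely continuous with respect to μ_V with continuous density, the reversed Kullback–Leibler functional K(ν) = −∫ log(dν/dμ_V) dμ_V + ν([α⁻,α⁺]) − 1 satisfies K(μ) − ∫ f dμ < K(ν) − ∫ f dν; i.e., μ is an exposed point of K with exposing hyperplane f. -/
open MeasureTheory Real Set
open scoped NNReal ENNReal

/-- With `dμ = h dμ_V`, `h` continuous and strictly positive, and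
`f = 1 − 1/h` (continuous with `sup f < 1`), the reversed KL functional
`K(ν) = −∫ log(dν/dμ_V) dμ_V + ν([α⁻,α⁺]) − 1` satisfies
`K(μ) − ∫ f dμ < K(ν) − ∫ f dν` for every `ν ≠ μ` with continuous strictly positive
density `g` w.r.t. `μ_V`; i.e. `μ` is an exposed point of `K` with exposing hyperplane `f`. -/
theorem stmt10 (am ap : ℝ) (ham : am ≤ ap)
    (μV : Measure ℝ) [IsProbabilityMeasure μV] (hsupp : μV (Set.Icc am ap)ᶜ = 0)
    (h g : ℝ → ℝ)
    (hh : ContinuousOn h (Set.Icc am ap)) (hhpos : ∀ x ∈ Set.Icc am ap, 0 < h x)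
    (hgc : ContinuousOn g (Set.Icc am ap)) (hgpos : ∀ x ∈ Set.Icc am ap, 0 < g x)
    (μ ν : Measure ℝ)
    (hμ : μ = μV.withDensity fun x => ENNReal.ofReal (h x))
    (hν : ν = μV.withDensity fun x => ENNReal.ofReal (g x))
    (hne : ν ≠ μ)
    (f : ℝ → ℝ) (hf : ∀ x, f x = 1 - 1 / h x)
    (Kμ Kν : ℝ)
    (hKμ : Kμ = -∫ x, Real.log (h x) ∂μV + (μ (Set.Icc am ap)).toReal - 1)
    (hKν : Kν = -∫ x, Real.log (g x) ∂μV + (ν (Set.Icc am ap)).toReal - 1) :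
    ContinuousOn f (Set.Icc am ap) ∧ sSup (f '' Set.Icc am ap) < 1 ∧
      Kμ - ∫ x, f x ∂μ < Kν - ∫ x, f x ∂ν := by
  set S := Set.Icc am ap with hSdef
  have hSm : MeasurableSet S := measurableSet_Icc
  have hSc : IsCompact S := isCompact_Icc
  have hSne : S.Nonempty := Set.nonempty_Icc.2 ham
  have haeS : ∀ᵐ x ∂μV, x ∈ S := by
    rw [ae_iff]; exact hsupp
  have hres : μV.restrict S = μV := Measure.restrict_eq_self_of_ae_mem haeS
  have intc : ∀ u : ℝ → ℝ, ContinuousOn u S → Integrable u μV := by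
    intro u hu
    have := hu.integrableOn_compact (μ := μV) hSc
    rwa [IntegrableOn, hres] at this
  have hhne : ∀ x ∈ S, h x ≠ 0 := fun x hx => (hhpos x hx).ne'
  have hgne : ∀ x ∈ S, g x ≠ 0 := fun x hx => (hgpos x hx).ne'
  -- continuity of f
  have hfc : ContinuousOn f S := by
    have : ContinuousOn (fun x => 1 - 1 / h x) S :=
      continuousOn_const.sub (continuousOn_const.div hh hhne)
    exact this.congr fun x _ => hf x
  refine ⟨hfc, ?_, ?_⟩
  · -- sup part
    have himg : IsCompact (f '' S) := hSc.image_of_continuousOn hfc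
    obtain ⟨x0, hx0, hx0e⟩ := himg.sSup_mem (hSne.image f)
    rw [← hx0e, hf x0]
    have h1 : 0 < 1 / h x0 := by
      have := hhpos x0 hx0
      positivity
    linarith
  · -- main inequality
    have hlogh : ContinuousOn (fun x => Real.log (h x)) S := hh.log hhne
    have hlogg : ContinuousOn (fun x => Real.log (g x)) S := hgc.log hgne
    have hgdh : ContinuousOn (fun x => g x / h x) S := hgc.div hh hhne
    have hhf : ContinuousOn (fun x => h x * f x) S := hh.mul hfc
    have hgf : ContinuousOn (fun x => g x * f x) S := hgc.mul hfc
    have hφc : ContinuousOn (fun x => Real.log (h x) - Real.log (g x) + (g x / h x - 1)) S :=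
      (hlogh.sub hlogg).add (hgdh.sub continuousOn_const)
    have ih := intc h hh
    have ig := intc g hgc
    have ilh := intc _ hlogh
    have ilg := intc _ hlogg
    have igdh := intc _ hgdh
    have ihf := intc _ hhf
    have igf := intc _ hgf
    have iφ := intc _ hφc
    -- integrals against withDensity
    have key : ∀ u w : ℝ → ℝ, (∀ x ∈ S, 0 < u x) → AEMeasurable u μV →
        ∫ x, w x ∂(μV.withDensity fun x => ENNReal.ofReal (u x)) = ∫ x, u x * w x ∂μV := by
      intro u w hupos hum
      have h1 : (fun x => ENNReal.ofReal (u x))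
          = fun x => (((u x).toNNReal : NNReal) : ENNReal) := rfl
      rw [h1, integral_withDensity_eq_integral_smul₀ (f := fun x => (u x).toNNReal)
        (measurable_real_toNNReal.comp_aemeasurable hum) w]
      refine integral_congr_ae ?_
      filter_upwards [haeS] with x hx
      simp [NNReal.smul_def, Real.coe_toNNReal _ (hupos x hx).le]
    have measval : ∀ u : ℝ → ℝ, Integrable u μV → (∀ x ∈ S, 0 < u x) →
        ((μV.withDensity fun x => ENNReal.ofReal (u x)) S).toReal = ∫ x, u x ∂μV := by
      intro u hu hupos
      rw [withDensity_apply _ hSm, hres]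
      exact (integral_eq_lintegral_of_nonneg_ae
        (by filter_upwards [haeS] with x hx using (hupos x hx).le)
        hu.aestronglyMeasurable).symm
    have hM : (μ S).toReal = ∫ x, h x ∂μV := by rw [hμ]; exact measval h ih hhpos
    have hN : (ν S).toReal = ∫ x, g x ∂μV := by rw [hν]; exact measval g ig hgpos
    have hIμ : ∫ x, f x ∂μ = ∫ x, h x * f x ∂μV := by
      rw [hμ]; exact key h f hhpos ih.aemeasurable
    have hIν : ∫ x, f x ∂ν = ∫ x, g x * f x ∂μV := by
      rw [hν]; exact key g f hgpos ig.aemeasurable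
    have e1 : ∫ x, h x * f x ∂μV = ∫ x, h x ∂μV - 1 := by
      have e : ∫ x, h x * f x ∂μV = ∫ x, (h x - 1) ∂μV := by
        refine integral_congr_ae ?_
        filter_upwards [haeS] with x hx
        rw [hf x, mul_sub, mul_one, mul_one_div, div_self (hhne x hx)]
      rw [e, integral_sub ih (integrable_const 1), integral_const]
      simp
    have e2 : ∫ x, g x * f x ∂μV = ∫ x, g x ∂μV - ∫ x, g x / h x ∂μV := by
      have e : ∫ x, g x * f x ∂μV = ∫ x, (g x - g x / h x) ∂μV := by
        refine integral_congr_ae ?_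
        filter_upwards [haeS] with x hx
        rw [hf x, mul_sub, mul_one, mul_one_div]
      rw [e, integral_sub ig igdh]
    have hφnn : 0 ≤ᵐ[μV] fun x => Real.log (h x) - Real.log (g x) + (g x / h x - 1) := by
      filter_upwards [haeS] with x hx
      have hgx := hgpos x hx
      have hhx := hhpos x hx
      have ht : 0 < g x / h x := div_pos hgx hhx
      have hl := Real.log_le_sub_one_of_pos ht
      rw [Real.log_div hgx.ne' hhx.ne'] at hl
      simp only [Pi.zero_apply]
      linarith
    have hφpos : 0 < ∫ x, (Real.log (h x) - Real.log (g x) + (g x / h x - 1)) ∂μV := by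
      rcases (integral_nonneg_of_ae hφnn).lt_or_eq with hlt | heq
      · exact hlt
      · exfalso
        have hzero : (fun x => Real.log (h x) - Real.log (g x) + (g x / h x - 1)) =ᵐ[μV] 0 :=
          (integral_eq_zero_iff_of_nonneg_ae hφnn iφ).mp heq.symm
        have hgh : (fun x => ENNReal.ofReal (g x)) =ᵐ[μV] fun x => ENNReal.ofReal (h x) := by
          filter_upwards [haeS, hzero] with x hx hz
          have hgx := hgpos x hx
          have hhx := hhpos x hx
          have ht : 0 < g x / h x := div_pos hgx hhx
          by_cases he : g x = h x
          · rw [he]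
          · exfalso
            have ht1 : g x / h x ≠ 1 := fun h1 =>
              he ((div_eq_one_iff_eq hhx.ne').mp h1)
            have hlt := Real.log_lt_sub_one_of_pos ht ht1
            rw [Real.log_div hgx.ne' hhx.ne'] at hlt
            simp only [Pi.zero_apply] at hz
            linarith
        exact hne (by rw [hν, hμ, withDensity_congr_ae hgh])
    have eφ : ∫ x, (Real.log (h x) - Real.log (g x) + (g x / h x - 1)) ∂μV
        = (∫ x, Real.log (h x) ∂μV - ∫ x, Real.log (g x) ∂μV)
          + (∫ x, g x / h x ∂μV - 1) := by
      have i1 : Integrable (fun x => Real.log (h x) - Real.log (g x)) μV := ilh.sub ilg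
      have i2 : Integrable (fun x => g x / h x - 1) μV := igdh.sub (integrable_const 1)
      rw [integral_add i1 i2, integral_sub ilh ilg, integral_sub igdh (integrable_const 1),
        integral_const]
      simp
    rw [hKμ, hKν, hIμ, hIν, e1, e2, hM, hN]
    rw [eφ] at hφpos
    linarith
end

section
/- Let I_Y : Y → [0,∞] be a function on a topological space Y and define J(φ) = sup_{y∈Y}(φ(y) − I_Y(y)) for bounded continuous φ. Then the double Legendre transform recovers the lower semicontinuous envelope from below: for every y ∈ Y, sup_{φ ∈ C_b(Y)} (φ(y) − J(φ)) ≤ I_Y(y), with equality if I_Y is lower semicontinuous and Y is a completely regular (e.g. metric) space. -/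
open BoundedContinuousFunction

/-- For `I_Y : Y → [0,∞]` not identically `+∞` on a completely regular
Hausdorff space and `J(φ) = sup_y (φ(y) − I_Y(y))` for bounded continuous `φ`, one has
`sup_{φ ∈ C_b(Y)} (φ(y) − J(φ)) ≤ I_Y(y)` for every `y`, with equality if `I_Y` is
lower semicontinuous. -/
theorem stmt19 {Y : Type*} [TopologicalSpace Y] [T2Space Y] [CompletelyRegularSpace Y]
    (IY : Y → EReal) (hIY0 : ∀ y, 0 ≤ IY y) (hIYne : ∃ y, IY y ≠ ⊤)
    (J : BoundedContinuousFunction Y ℝ → EReal)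
    (hJ : ∀ φ : BoundedContinuousFunction Y ℝ, J φ = ⨆ y : Y, ((φ y : EReal) - IY y)) :
    (∀ y : Y, (⨆ φ : BoundedContinuousFunction Y ℝ, ((φ y : EReal) - J φ)) ≤ IY y) ∧
      (LowerSemicontinuous IY →
        ∀ y : Y, (⨆ φ : BoundedContinuousFunction Y ℝ, ((φ y : EReal) - J φ)) = IY y) := by
  obtain ⟨y₀, hy₀⟩ := hIYne
  -- J φ is never ⊥
  have hJbot : ∀ φ : BoundedContinuousFunction Y ℝ, J φ ≠ ⊥ := by
    intro φ
    have h1 : ((φ y₀ : EReal) - IY y₀) ≤ J φ := by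
      rw [hJ]; exact le_iSup (fun y => ((φ y : EReal) - IY y)) y₀
    intro hbot
    rw [hbot, le_bot_iff] at h1
    have : IY y₀ ≠ ⊥ := ne_of_gt (lt_of_lt_of_le EReal.bot_lt_zero (hIY0 y₀))
    lift IY y₀ to ℝ using ⟨hy₀, this⟩ with t
    rw [← EReal.coe_sub] at h1
    exact EReal.coe_ne_bot _ h1
  -- the first inequality
  have part1 : ∀ y : Y, (⨆ φ : BoundedContinuousFunction Y ℝ, ((φ y : EReal) - J φ)) ≤ IY y := by
    intro y
    apply iSup_le
    intro φ
    have hIYybot : IY y ≠ ⊥ := ne_of_gt (lt_of_lt_of_le EReal.bot_lt_zero (hIY0 y))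
    rcases eq_or_ne (IY y) ⊤ with htop | htop
    · rw [htop]; exact le_top
    · obtain ⟨t, ht⟩ : ∃ t : ℝ, IY y = (t : EReal) :=
        ⟨(IY y).toReal, (EReal.coe_toReal htop hIYybot).symm⟩
      rw [ht]
      have h1 : ((φ y : EReal) - (t : EReal)) ≤ J φ := by
        have := le_iSup (fun z => ((φ z : EReal) - IY z)) y
        rw [← hJ, ht] at this; exact this
      rw [EReal.sub_le_iff_le_add (Or.inl (hJbot φ)) (Or.inr (EReal.coe_ne_bot t))]
      calc (φ y : EReal) = ((φ y : EReal) - (t : EReal)) + (t : EReal) := by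
            rw [← EReal.coe_sub, ← EReal.coe_add]; norm_num
        _ ≤ J φ + (t : EReal) := by
            exact add_le_add_left h1 _
        _ = (t : EReal) + J φ := add_comm _ _
  refine ⟨part1, ?_⟩
  intro hLSC y
  refine le_antisymm (part1 y) ?_
  -- S ≥ 0, via φ = 0
  have hS0 : (0 : EReal) ≤ ⨆ φ : BoundedContinuousFunction Y ℝ, ((φ y : EReal) - J φ) := by
    have hJ0 : J 0 ≤ 0 := by
      rw [hJ]
      apply iSup_le
      intro x
      simp only [BoundedContinuousFunction.coe_zero, Pi.zero_apply, EReal.coe_zero]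
      rw [EReal.sub_le_iff_le_add (Or.inr (by simp)) (Or.inr (by simp)), zero_add]
      exact hIY0 x
    calc (0 : EReal) = (0 : EReal) - 0 := by simp
      _ ≤ ((0 : BoundedContinuousFunction Y ℝ) y : EReal) - J 0 := by
          apply EReal.sub_le_sub _ hJ0
          simp
      _ ≤ _ := le_iSup (fun φ : BoundedContinuousFunction Y ℝ => ((φ y : EReal) - J φ)) 0
  rw [← EReal.ge_of_forall_gt_iff_ge]
  intro z hz
  rcases lt_or_ge z 0 with hzneg | hznn
  · exact le_trans (le_of_lt (by exact_mod_cast hzneg)) hS0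
  -- now 0 ≤ z and (z : EReal) < IY y
  have hUopen : IsOpen {x : Y | (z : EReal) < IY x} := hLSC.isOpen_preimage z
  have hyU : y ∈ {x : Y | (z : EReal) < IY x} := hz
  obtain ⟨f, hfc, hfy, hfK⟩ := CompletelyRegularSpace.completely_regular y
    {x : Y | (z : EReal) < IY x}ᶜ hUopen.isClosed_compl (by simpa using hyU)
  set g : Y → ℝ := fun x => z * (1 - (f x : ℝ)) with hg
  have hgc : Continuous g := continuous_const.mul (continuous_const.sub
    (continuous_subtype_val.comp hfc))
  have hgbd : ∀ x, ‖g x‖ ≤ z := by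
    intro x
    have h1 : (0 : ℝ) ≤ (f x : ℝ) := (f x).2.1
    have h2 : (f x : ℝ) ≤ 1 := (f x).2.2
    have hgx : g x = z * (1 - (f x : ℝ)) := rfl
    rw [hgx, Real.norm_eq_abs, abs_le]
    constructor
    · nlinarith
    · nlinarith
  set φ : BoundedContinuousFunction Y ℝ :=
    BoundedContinuousFunction.ofNormedAddCommGroup g hgc z hgbd with hφ
  have hφapp : ∀ x, φ x = g x := fun x => rfl
  have hφy : φ y = z := by rw [hφapp, hg]; simp [hfy]
  have hJφ : J φ ≤ 0 := by
    rw [hJ]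
    apply iSup_le
    intro x
    rw [EReal.sub_le_iff_le_add (Or.inr (by simp)) (Or.inr (by simp)), zero_add]
    by_cases hx : (z : EReal) < IY x
    · have hgle : φ x ≤ z := by
        rw [hφapp]
        have hgx : g x = z * (1 - (f x : ℝ)) := rfl
        have h1 : (0 : ℝ) ≤ (f x : ℝ) := (f x).2.1
        rw [hgx]; nlinarith
      exact le_trans (by exact_mod_cast hgle) hx.le
    · have hxK : x ∈ {x : Y | (z : EReal) < IY x}ᶜ := hx
      have : f x = 1 := hfK hxK
      have hgx : φ x = 0 := by rw [hφapp, hg]; simp [this]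
      rw [hgx]
      exact_mod_cast hIY0 x
  calc (z : EReal) = (z : EReal) - 0 := by simp
    _ ≤ (φ y : EReal) - J φ := by
        apply EReal.sub_le_sub _ hJφ
        rw [hφy]
    _ ≤ _ := le_iSup (fun φ : BoundedContinuousFunction Y ℝ => ((φ y : EReal) - J φ)) φ
end
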